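/- Let Θ be an X → ℓ2 ε-subspace embedding for Y, let Z ⊆ Y be a subspace, and for y' ∈ Y' define ‖y'‖_{Z'} = max_{x ∈ Z\{0}} |⟨y', x⟩|/‖x‖_X and ‖y'‖_{Z'}^Θ = max_{x ∈ Z\{0}} |⟨Θ R_X^{-1} y', Θ x⟩| / ‖Θ x‖. Then for all y' ∈ Y': (1/√(1+ε))(‖y'‖_{Z'} − ε‖y'‖_{X'}) ≤ ‖y'‖_{Z'}^Θ ≤ (1/√(1−ε))(‖y'‖_{Z'} + ε‖y'‖_{X'}). -/

import Mathlib

open Matrix BigOperators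

noncomputable section

/-- Inner product induced by `R`: `⟨x,y⟩_U = ⟨R x, y⟩`. -/
def ipR {n : ℕ} (R : Matrix (Fin n) (Fin n) ℝ) (x y : Fin n → ℝ) : ℝ :=
  R.mulVec x ⬝ᵥ y

/-- Norm induced by `R`. -/
def normR {n : ℕ} (R : Matrix (Fin n) (Fin n) ℝ) (x : Fin n → ℝ) : ℝ :=
  Real.sqrt (ipR R x x)

/-- Euclidean norm. -/
def norm2 {m : ℕ} (v : Fin m → ℝ) : ℝ :=
  Real.sqrt (v ⬝ᵥ v)

/-- Dual norm `‖y‖_{U'}` induced by `⟨·, R⁻¹ ·⟩`. -/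
def normDual {n : ℕ} (R : Matrix (Fin n) (Fin n) ℝ) (y : Fin n → ℝ) : ℝ :=
  Real.sqrt (y ⬝ᵥ R⁻¹.mulVec y)

/-- Dual seminorm `‖y‖_{Z'} = sup_{w ∈ Z, w ≠ 0} |⟨y,w⟩|/‖w‖_U`. -/
def dualSemi {n : ℕ} (R : Matrix (Fin n) (Fin n) ℝ) (Z : Submodule ℝ (Fin n → ℝ))
    (y : Fin n → ℝ) : ℝ :=
  ⨆ w : Z, |y ⬝ᵥ (w : Fin n → ℝ)| / normR R (w : Fin n → ℝ)

/-- Sketched dual seminorm `‖y‖_{Z'}^Θ = sup_{w ∈ Z, w ≠ 0} |⟨Θ R⁻¹ y, Θ w⟩|/‖Θ w‖`. -/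
def skDualSemi {n k : ℕ} (R : Matrix (Fin n) (Fin n) ℝ) (Θ : Matrix (Fin k) (Fin n) ℝ)
    (Z : Submodule ℝ (Fin n → ℝ)) (y : Fin n → ℝ) : ℝ :=
  ⨆ w : Z, |(Θ.mulVec (R⁻¹.mulVec y)) ⬝ᵥ (Θ.mulVec (w : Fin n → ℝ))| /
      norm2 (Θ.mulVec (w : Fin n → ℝ))

/-- `i`-th column of a matrix as a vector. -/
def colV {n m : ℕ} (M : Matrix (Fin n) (Fin m) ℝ) (i : Fin m) : Fin n → ℝ :=
  fun j => M j i

/-- Squared Frobenius norm. -/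
def frob2 {a b : ℕ} (M : Matrix (Fin a) (Fin b) ℝ) : ℝ :=
  ∑ i, ∑ j, (M i j) ^ 2

section lemmas
variable {n : ℕ} {R : Matrix (Fin n) (Fin n) ℝ}

lemma ipR_symm (hR : R.PosDef) (x y : Fin n → ℝ) : ipR R x y = ipR R y x := by
  have hsym : ∀ i j, R i j = R j i := fun i j => by
    have := hR.isHermitian.apply i j
    simpa using this.symm
  simp only [ipR, mulVec, dotProduct, Finset.sum_mul]
  rw [Finset.sum_comm]
  refine Finset.sum_congr rfl fun i _ => Finset.sum_congr rfl fun j _ => ?_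
  rw [hsym i j]; ring

lemma ipR_nonneg (hR : R.PosDef) (x : Fin n → ℝ) : 0 ≤ ipR R x x := by
  have := hR.posSemidef.dotProduct_mulVec_nonneg x
  simpa [ipR, dotProduct_comm] using this

lemma ipR_pos (hR : R.PosDef) {x : Fin n → ℝ} (hx : x ≠ 0) : 0 < ipR R x x := by
  have := hR.dotProduct_mulVec_pos hx
  simpa [ipR, dotProduct_comm] using this

lemma ipR_sub_left (x y z : Fin n → ℝ) : ipR R (x - y) z = ipR R x z - ipR R y z := by
  simp [ipR, Matrix.mulVec_sub, sub_dotProduct]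

lemma ipR_sub_right (x y z : Fin n → ℝ) : ipR R x (y - z) = ipR R x y - ipR R x z := by
  simp [ipR, dotProduct_sub]

lemma ipR_smul_left (c : ℝ) (x y : Fin n → ℝ) : ipR R (c • x) y = c * ipR R x y := by
  simp [ipR, mulVec_smul, smul_dotProduct]

lemma ipR_smul_right (c : ℝ) (x y : Fin n → ℝ) : ipR R x (c • y) = c * ipR R x y := by
  simp [ipR, dotProduct_smul]

lemma ipR_cs (hR : R.PosDef) (x y : Fin n → ℝ) : |ipR R x y| ≤ normR R x * normR R y := by
  rcases eq_or_ne y 0 with rfl | hy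
  · simp [ipR, normR]
  · have hyy : 0 < ipR R y y := ipR_pos hR hy
    set t : ℝ := ipR R x y / ipR R y y with ht
    have h0 : 0 ≤ ipR R (x - t • y) (x - t • y) := ipR_nonneg hR _
    simp only [ipR_sub_left, ipR_sub_right, ipR_smul_left, ipR_smul_right] at h0
    rw [ipR_symm hR y x] at h0
    have key : (ipR R x y)^2 ≤ ipR R x x * ipR R y y := by
      rw [ht] at h0
      have := hyy.ne'
      field_simp at h0
      nlinarith
    have h1 : |ipR R x y| = Real.sqrt ((ipR R x y)^2) := by
      rw [Real.sqrt_sq_eq_abs]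
    rw [h1, normR, normR, ← Real.sqrt_mul (ipR_nonneg hR x)]
    exact Real.sqrt_le_sqrt key

end lemmas

section lemmas2
variable {n : ℕ} {R : Matrix (Fin n) (Fin n) ℝ}

lemma norm2_nonneg {m : ℕ} (v : Fin m → ℝ) : 0 ≤ norm2 v := Real.sqrt_nonneg _

lemma normR_nonneg (x : Fin n → ℝ) : 0 ≤ normR R x := Real.sqrt_nonneg _

lemma normR_pos (hR : R.PosDef) {x : Fin n → ℝ} (hx : x ≠ 0) : 0 < normR R x :=
  Real.sqrt_pos.2 (ipR_pos hR hx)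

lemma norm2_cs {m : ℕ} (u v : Fin m → ℝ) : |u ⬝ᵥ v| ≤ norm2 u * norm2 v := by
  have key : (u ⬝ᵥ v)^2 ≤ (u ⬝ᵥ u) * (v ⬝ᵥ v) := by
    have := Finset.sum_mul_sq_le_sq_mul_sq Finset.univ u v
    simpa [dotProduct, sq] using this
  have h1 : |u ⬝ᵥ v| = Real.sqrt ((u ⬝ᵥ v)^2) := (Real.sqrt_sq_eq_abs _).symm
  have h2 : 0 ≤ u ⬝ᵥ u := by
    simpa [dotProduct, sq] using Finset.sum_nonneg (fun i _ => mul_self_nonneg (u i))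
  rw [h1, norm2, norm2, ← Real.sqrt_mul h2]
  exact Real.sqrt_le_sqrt key

end lemmas2

/-- Two-sided bound relating the sketched dual seminorm `‖·‖_{Z'}^Θ` to the exact
dual seminorm `‖·‖_{Z'}` for vectors of `Y' = R Y`. -/
theorem sketched_seminorm_bounds {n k : ℕ} (R : Matrix (Fin n) (Fin n) ℝ) (hR : R.PosDef)
    (Θ : Matrix (Fin k) (Fin n) ℝ) (Y Z : Submodule ℝ (Fin n → ℝ)) (hZ : Z ≤ Y)
    (ε : ℝ) (hε0 : 0 ≤ ε) (hε1 : ε < 1)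
    (hemb : ∀ x ∈ Y, ∀ y ∈ Y,
      |ipR R x y - (Θ.mulVec x) ⬝ᵥ (Θ.mulVec y)| ≤ ε * normR R x * normR R y) :
    ∀ y' ∈ Submodule.map R.mulVecLin Y,
      (1 / Real.sqrt (1 + ε)) * (dualSemi R Z y' - ε * normDual R y') ≤
        skDualSemi R Θ Z y' ∧
      skDualSemi R Θ Z y' ≤
        (1 / Real.sqrt (1 - ε)) * (dualSemi R Z y' + ε * normDual R y') := by
  rintro y' hy'
  obtain ⟨y, hyY, rfl⟩ := Submodule.mem_map.1 hy'
  simp only [mulVecLin_apply]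
  have hRdet : IsUnit R.det := hR.det_pos.ne'.isUnit
  have hinv : R⁻¹.mulVec (R.mulVec y) = y := by
    rw [mulVec_mulVec, Matrix.nonsing_inv_mul R hRdet, one_mulVec]
  have hnd : normDual R (R.mulVec y) = normR R y := by
    rw [normDual, hinv, normR, ipR, dotProduct_comm]
  have hsk_eq : skDualSemi R Θ Z (R.mulVec y) =
      ⨆ w : Z, |(Θ.mulVec y) ⬝ᵥ (Θ.mulVec (w : Fin n → ℝ))| /
        norm2 (Θ.mulVec (w : Fin n → ℝ)) := by
    unfold skDualSemi; rw [hinv]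
  have hip : ∀ w : Fin n → ℝ, R.mulVec y ⬝ᵥ w = ipR R y w := fun w => rfl
  -- bounds for each w ∈ Z
  have hA : ∀ w : Z, |ipR R y w - (Θ.mulVec y) ⬝ᵥ (Θ.mulVec (w : Fin n → ℝ))| ≤
      ε * normR R y * normR R (w : Fin n → ℝ) :=
    fun w => hemb y hyY w (hZ w.2)
  have hB : ∀ w : Z, |ipR R (w : Fin n → ℝ) w - (Θ.mulVec (w : Fin n → ℝ)) ⬝ᵥ (Θ.mulVec (w : Fin n → ℝ))| ≤
      ε * normR R (w : Fin n → ℝ) * normR R (w : Fin n → ℝ) :=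
    fun w => hemb w (hZ w.2) w (hZ w.2)
  have h1ε : (0:ℝ) < 1 - ε := by linarith
  have h1ε' : (0:ℝ) < 1 + ε := by linarith
  have hs1 : 0 < Real.sqrt (1 + ε) := Real.sqrt_pos.2 h1ε'
  have hs2 : 0 < Real.sqrt (1 - ε) := Real.sqrt_pos.2 h1ε
  -- Theta norm bounds
  have hup : ∀ w : Z, norm2 (Θ.mulVec (w : Fin n → ℝ)) ≤
      Real.sqrt (1 + ε) * normR R (w : Fin n → ℝ) := by
    intro w
    have h := hB w
    have h2 : (Θ.mulVec (w : Fin n → ℝ)) ⬝ᵥ (Θ.mulVec (w : Fin n → ℝ)) ≤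
        (1 + ε) * ipR R (w : Fin n → ℝ) w := by
      have habs := abs_le.1 h
      have hnsq : (normR R (w : Fin n → ℝ))^2 = ipR R (w : Fin n → ℝ) w := by
        rw [normR, Real.sq_sqrt (ipR_nonneg hR _)]
      nlinarith [habs.1, habs.2]
    calc norm2 (Θ.mulVec (w : Fin n → ℝ)) ≤ Real.sqrt ((1 + ε) * ipR R (w : Fin n → ℝ) w) :=
          Real.sqrt_le_sqrt h2
      _ = Real.sqrt (1 + ε) * normR R (w : Fin n → ℝ) := by
          rw [Real.sqrt_mul h1ε'.le, normR]
  have hlo : ∀ w : Z, Real.sqrt (1 - ε) * normR R (w : Fin n → ℝ) ≤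
      norm2 (Θ.mulVec (w : Fin n → ℝ)) := by
    intro w
    have h := hB w
    have h2 : (1 - ε) * ipR R (w : Fin n → ℝ) w ≤
        (Θ.mulVec (w : Fin n → ℝ)) ⬝ᵥ (Θ.mulVec (w : Fin n → ℝ)) := by
      have habs := abs_le.1 h
      have hnsq : (normR R (w : Fin n → ℝ))^2 = ipR R (w : Fin n → ℝ) w := by
        rw [normR, Real.sq_sqrt (ipR_nonneg hR _)]
      nlinarith [habs.1, habs.2]
    calc Real.sqrt (1 - ε) * normR R (w : Fin n → ℝ)
        = Real.sqrt ((1 - ε) * ipR R (w : Fin n → ℝ) w) := by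
          rw [Real.sqrt_mul h1ε.le, normR]
      _ ≤ norm2 (Θ.mulVec (w : Fin n → ℝ)) := Real.sqrt_le_sqrt h2
  -- boundedness
  have bdd_ds : BddAbove (Set.range fun w : Z =>
      |R.mulVec y ⬝ᵥ (w : Fin n → ℝ)| / normR R (w : Fin n → ℝ)) := by
    refine ⟨normR R y, ?_⟩
    rintro _ ⟨w, rfl⟩
    dsimp only
    rcases eq_or_ne (w : Fin n → ℝ) 0 with h0 | h0
    · simp [h0, normR, ipR, normR_nonneg (R := R) y]
    · rw [hip, div_le_iff₀ (normR_pos hR h0)]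
      calc |ipR R y w| ≤ normR R y * normR R (w : Fin n → ℝ) := ipR_cs hR y w
        _ = normR R y * normR R (w : Fin n → ℝ) := rfl
  have bdd_sk : BddAbove (Set.range fun w : Z =>
      |(Θ.mulVec y) ⬝ᵥ (Θ.mulVec (w : Fin n → ℝ))| / norm2 (Θ.mulVec (w : Fin n → ℝ))) := by
    refine ⟨norm2 (Θ.mulVec y), ?_⟩
    rintro _ ⟨w, rfl⟩
    dsimp only
    rcases eq_or_ne (norm2 (Θ.mulVec (w : Fin n → ℝ))) 0 with h0 | h0
    · simp [h0, norm2_nonneg (Θ.mulVec y)]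
    · have hpos : 0 < norm2 (Θ.mulVec (w : Fin n → ℝ)) :=
        lt_of_le_of_ne (norm2_nonneg _) (Ne.symm h0)
      rw [div_le_iff₀ hpos]
      exact norm2_cs _ _
  set ds := dualSemi R Z (R.mulVec y) with hds_def
  set nd := normDual R (R.mulVec y) with hnd_def
  have hds_le : ∀ w : Z, |R.mulVec y ⬝ᵥ (w : Fin n → ℝ)| / normR R (w : Fin n → ℝ) ≤ ds :=
    fun w => le_ciSup bdd_ds w
  set sk := skDualSemi R Θ Z (R.mulVec y) with hsk_def
  have hsk_le : ∀ w : Z,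
      |(Θ.mulVec y) ⬝ᵥ (Θ.mulVec (w : Fin n → ℝ))| / norm2 (Θ.mulVec (w : Fin n → ℝ)) ≤ sk := by
    intro w
    rw [hsk_eq]
    exact le_ciSup bdd_sk w
  have hds0 : 0 ≤ ds := le_trans (by simp [normR, ipR]) (hds_le ⟨0, Z.zero_mem⟩)
  have hsk0 : 0 ≤ sk := le_trans (by simp [norm2]) (hsk_le ⟨0, Z.zero_mem⟩)
  have hnd0 : 0 ≤ nd := Real.sqrt_nonneg _
  constructor
  · -- lower bound
    have key : ds ≤ Real.sqrt (1 + ε) * sk + ε * normR R y := by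
      rw [hds_def, dualSemi]
      apply ciSup_le
      intro w
      rcases eq_or_ne (w : Fin n → ℝ) 0 with h0 | h0
      · rw [h0]
        simp only [dotProduct_zero, abs_zero, zero_div]
        exact add_nonneg (mul_nonneg hs1.le hsk0) (mul_nonneg hε0 (normR_nonneg y))
      · have hwpos : 0 < normR R (w : Fin n → ℝ) := normR_pos hR h0
        have hΘpos : 0 < norm2 (Θ.mulVec (w : Fin n → ℝ)) :=
          lt_of_lt_of_le (by positivity) (hlo w)
        rw [hip, div_le_iff₀ hwpos]
        have step1 : |ipR R y w| ≤
            |(Θ.mulVec y) ⬝ᵥ (Θ.mulVec (w : Fin n → ℝ))| + ε * normR R y * normR R (w : Fin n → ℝ) := by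
          have := hA w
          have h3 := abs_sub_abs_le_abs_sub (ipR R y w) ((Θ.mulVec y) ⬝ᵥ (Θ.mulVec (w : Fin n → ℝ)))
          linarith [abs_le.1 this]
        have step2 : |(Θ.mulVec y) ⬝ᵥ (Θ.mulVec (w : Fin n → ℝ))| ≤
            sk * norm2 (Θ.mulVec (w : Fin n → ℝ)) :=
          (div_le_iff₀ hΘpos).1 (hsk_le w)
        have step3 : sk * norm2 (Θ.mulVec (w : Fin n → ℝ)) ≤
            sk * (Real.sqrt (1 + ε) * normR R (w : Fin n → ℝ)) :=
          mul_le_mul_of_nonneg_left (hup w) hsk0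
        nlinarith [mul_nonneg (mul_nonneg hε0 (normR_nonneg (R := R) y)) hwpos.le]
    rw [hnd]
    rw [one_div, inv_mul_le_iff₀ hs1]
    linarith
  · -- upper bound
    rw [hsk_eq]
    apply ciSup_le
    intro w
    rcases eq_or_ne (w : Fin n → ℝ) 0 with h0 | h0
    · rw [h0]
      simp only [mulVec_zero, dotProduct_zero, abs_zero, zero_div]
      have : 0 ≤ ds + ε * nd := by positivity
      positivity
    · have hwpos : 0 < normR R (w : Fin n → ℝ) := normR_pos hR h0
      have hΘpos : 0 < norm2 (Θ.mulVec (w : Fin n → ℝ)) :=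
        lt_of_lt_of_le (by positivity) (hlo w)
      have step1 : |(Θ.mulVec y) ⬝ᵥ (Θ.mulVec (w : Fin n → ℝ))| ≤
          |ipR R y w| + ε * normR R y * normR R (w : Fin n → ℝ) := by
        have := hA w
        have h3 := abs_sub_abs_le_abs_sub ((Θ.mulVec y) ⬝ᵥ (Θ.mulVec (w : Fin n → ℝ))) (ipR R y w)
        rw [abs_sub_comm] at h3
        linarith [abs_le.1 this, h3]
      have step2 : |ipR R y w| ≤ ds * normR R (w : Fin n → ℝ) := by
        have := hds_le w
        rw [hip, div_le_iff₀ hwpos] at this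
        exact this
      rw [div_le_iff₀ hΘpos]
      have hrhs0 : 0 ≤ 1 / Real.sqrt (1 - ε) * (ds + ε * nd) := by positivity
      calc |(Θ.mulVec y) ⬝ᵥ (Θ.mulVec (w : Fin n → ℝ))|
          ≤ (ds + ε * normR R y) * normR R (w : Fin n → ℝ) := by nlinarith
        _ = (1 / Real.sqrt (1 - ε) * (ds + ε * nd)) * (Real.sqrt (1 - ε) * normR R (w : Fin n → ℝ)) := by
            rw [hnd]
            field_simp
        _ ≤ (1 / Real.sqrt (1 - ε) * (ds + ε * nd)) * norm2 (Θ.mulVec (w : Fin n → ℝ)) :=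
            mul_le_mul_of_nonneg_left (hlo w) hrhs0
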